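/- Fix λ > 0, ω_n > 0, ξ ∈ (0,1], and β > 0. Then there exists a unique pair (A, ω) with A > 0 and ω ∈ (0, π/β) satisfying the harmonic balance conditions (4/(Aπ))·sin(ωβ/2) = |(ω_n² − ω²) + i·2ξω_nω| / λ and (π − ωβ)/2 = arg((ω_n² − ω²) + i·2ξω_nω), where arg denotes the principal argument of a complex number (Complex.arg). -/

import Mathlib

open Real

/-- Existence and uniqueness of the amplitude `A` and frequency `ω` solving the
harmonic balance equation for the linearized pendulum
`P(s) = λ/(s² + 2ξωₙs + ωₙ²)` in feedback with the burst controller of width `β`. -/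
theorem harmonic_balance_unique (lam ωn ξ β : ℝ)
    (hlam : 0 < lam) (hωn : 0 < ωn) (hξ : ξ ∈ Set.Ioc (0:ℝ) 1) (hβ : 0 < β) :
    ∃! p : ℝ × ℝ, 0 < p.1 ∧ p.2 ∈ Set.Ioo 0 (π / β) ∧
      (4 / (p.1 * π)) * Real.sin (p.2 * β / 2) =
        ‖((ωn ^ 2 - p.2 ^ 2 : ℝ) : ℂ) + Complex.I * ((2 * ξ * ωn * p.2 : ℝ) : ℂ)‖ / lam ∧
      (π - p.2 * β) / 2 =
        Complex.arg (((ωn ^ 2 - p.2 ^ 2 : ℝ) : ℂ) + Complex.I * ((2 * ξ * ωn * p.2 : ℝ) : ℂ)) := by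
  obtain ⟨hξ0, hξ1⟩ := hξ
  have hπ : (0:ℝ) < π := Real.pi_pos
  set z : ℝ → ℂ := fun ω => (((ωn ^ 2 - ω ^ 2 : ℝ) : ℂ) + Complex.I * ((2 * ξ * ωn * ω : ℝ) : ℂ))
    with hzdef
  have hre : ∀ ω, (z ω).re = ωn ^ 2 - ω ^ 2 := by
    intro ω
    simp [hzdef, ← Complex.ofReal_pow]
  have him : ∀ ω, (z ω).im = 2 * ξ * ωn * ω := by
    intro ω
    simp [hzdef, ← Complex.ofReal_pow]
  have him_pos : ∀ ω : ℝ, 0 < ω → 0 < (z ω).im := by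
    intro ω hω; rw [him]; positivity
  have hz_ne : ∀ ω : ℝ, 0 < ω → z ω ≠ 0 := by
    intro ω hω h0
    have := him_pos ω hω
    rw [h0] at this; simp at this
  have harg_pos : ∀ ω : ℝ, 0 < ω → 0 < Complex.arg (z ω) := by
    intro ω hω
    rcases lt_or_eq_of_le (Complex.arg_nonneg_iff.2 (him_pos ω hω).le) with h | h
    · exact h
    · exfalso
      have := (Complex.arg_eq_zero_iff.1 h.symm).2
      exact (him_pos ω hω).ne' this
  -- re > 0 whenever the phase condition holds for ω in (0, π/β)
  have hre_pos : ∀ ω : ℝ, 0 < ω → ω < π / β →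
      (π - ω * β) / 2 = Complex.arg (z ω) → 0 < (z ω).re := by
    intro ω hω hωπ heq
    have hωβ : ω * β < π := (lt_div_iff₀ hβ).1 hωπ
    have hωβ0 : 0 < ω * β := by positivity
    have hlt : Complex.arg (z ω) < π / 2 := by rw [← heq]; linarith
    rcases Complex.arg_lt_pi_div_two_iff.1 hlt with h | h | h
    · exact h
    · exact absurd h (not_lt.2 (him_pos ω hω).le)
    · exact absurd h (hz_ne ω hω)
  -- phase condition holds for at most one ω in (0, π/β)
  have huniq : ∀ a b : ℝ, 0 < a → a < π / β → 0 < b → b < π / β → a < b →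
      (π - a * β) / 2 = Complex.arg (z a) → (π - b * β) / 2 = Complex.arg (z b) → False := by
    intro a b ha haπ hb hbπ hab heqa heqb
    have hra : 0 < (z a).re := hre_pos a ha haπ heqa
    have hrb : 0 < (z b).re := hre_pos b hb hbπ heqb
    have haβ : 0 < a * β := by positivity
    have hbβpi : b * β < π := (lt_div_iff₀ hβ).1 hbπ
    have hlt : Complex.arg (z b) < Complex.arg (z a) := by
      rw [← heqa, ← heqb]
      have : a * β < b * β := mul_lt_mul_of_pos_right hab hβ
      linarith
    have h0b : 0 ≤ Complex.arg (z b) := (harg_pos b hb).le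
    have h2a : Complex.arg (z a) < π / 2 := by
      rw [← heqa]; linarith
    have htan := Real.tan_lt_tan_of_nonneg_of_lt_pi_div_two h0b h2a hlt
    rw [Complex.tan_arg, Complex.tan_arg] at htan
    rw [hre] at hra hrb
    rw [hre a, hre b, him a, him b] at htan
    rw [div_lt_div_iff₀ hrb hra] at htan
    have hc : 0 < 2 * ξ * ωn := by positivity
    nlinarith [mul_pos ha hb, mul_pos (mul_pos ha hb) (sub_pos.2 hab),
      mul_pos hc (mul_pos (sub_pos.2 hab) (mul_pos ha hb))]
  -- existence of ω₀ via the intermediate value theorem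
  set c : ℝ := min ωn (π / β) with hcdef
  have hc0 : 0 < c := lt_min hωn (div_pos hπ hβ)
  set g : ℝ → ℝ := fun ω => Complex.arg (z ω) + (ω * β - π) / 2 with hgdef
  have hzcont : Continuous z := by
    rw [hzdef]
    exact (Complex.continuous_ofReal.comp (continuous_const.sub (continuous_pow 2))).add
      (continuous_const.mul (Complex.continuous_ofReal.comp (continuous_const.mul continuous_id)))
  have hgc : ContinuousOn g (Set.Icc 0 c) := by
    intro x hx
    apply ContinuousWithinAt.add
    · refine ContinuousAt.continuousWithinAt
        (ContinuousAt.comp (Complex.continuousAt_arg ?_) hzcont.continuousAt)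
      rw [Complex.mem_slitPlane_iff]
      rcases eq_or_lt_of_le hx.1 with h | h
      · left; rw [hre]
        have hxωn : x ≤ ωn := le_trans hx.2 (min_le_left _ _)
        nlinarith [hωn]
      · right; exact (him_pos x h).ne'
    · exact (((continuous_id.mul continuous_const).sub continuous_const).div_const
        2).continuousWithinAt
  have hz0 : z 0 = ((ωn ^ 2 : ℝ) : ℂ) := by
    rw [hzdef]; push_cast; ring
  have hg0 : g 0 = -(π / 2) := by
    have h1 : Complex.arg (z 0) = 0 := by
      rw [hz0]; exact Complex.arg_ofReal_of_nonneg (by positivity)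
    show Complex.arg (z 0) + ((0:ℝ) * β - π) / 2 = -(π / 2)
    rw [h1]; ring
  have hgc_pos : 0 < g c := by
    show 0 < Complex.arg (z c) + (c * β - π) / 2
    rcases le_total ωn (π / β) with h | h
    · have hc : c = ωn := min_eq_left h
      have hzc : Complex.arg (z c) = π / 2 := by
        rw [Complex.arg_eq_pi_div_two_iff]
        constructor
        · rw [hre, hc]; ring
        · exact him_pos c hc0
      rw [hzc]
      have : 0 < c * β := by positivity
      linarith
    · have hc : c = π / β := min_eq_right h
      have hcb : c * β = π := by
        rw [hc]; field_simp
      have := harg_pos c hc0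
      rw [hcb]; simpa using this
  have hivt := intermediate_value_Ioo (le_of_lt hc0) hgc
  have h0mem : (0:ℝ) ∈ Set.Ioo (g 0) (g c) := by
    rw [hg0]; exact ⟨by linarith, hgc_pos⟩
  obtain ⟨ω₀, hω₀mem, hgω₀⟩ := hivt h0mem
  obtain ⟨hω₀0, hω₀c⟩ := hω₀mem
  have hω₀π : ω₀ < π / β := lt_of_lt_of_le hω₀c (min_le_right _ _)
  have hgω₀' : Complex.arg (z ω₀) + (ω₀ * β - π) / 2 = 0 := hgω₀
  have hphase₀ : (π - ω₀ * β) / 2 = Complex.arg (z ω₀) := by linarith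
  -- amplitude
  have hωβπ : ω₀ * β < π := (lt_div_iff₀ hβ).1 hω₀π
  have hsin_pos : 0 < Real.sin (ω₀ * β / 2) := by
    apply Real.sin_pos_of_pos_of_lt_pi
    · positivity
    · linarith
  have habs_pos : 0 < ‖z ω₀‖ := norm_pos_iff.mpr (hz_ne ω₀ hω₀0)
  set s : ℝ := Real.sin (ω₀ * β / 2) with hsdef
  set m : ℝ := ‖z ω₀‖ with hmdef
  set A₀ : ℝ := 4 * lam * s / (π * m) with hA₀def
  have hA₀pos : 0 < A₀ := by positivity
  have hmag₀ : (4 / (A₀ * π)) * s = m / lam := by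
    rw [hA₀def]
    field_simp
  refine ⟨(A₀, ω₀), ⟨hA₀pos, ⟨hω₀0, hω₀π⟩, hmag₀, hphase₀⟩, ?_⟩
  rintro ⟨A, ω⟩ ⟨hA, ⟨hω0, hωπ⟩, hmag, hphase⟩
  have hphase' : (π - ω * β) / 2 = Complex.arg (z ω) := hphase
  have hωeq : ω = ω₀ := by
    rcases lt_trichotomy ω ω₀ with h | h | h
    · exact (huniq ω ω₀ hω0 hωπ hω₀0 hω₀π h hphase' hphase₀).elim
    · exact h
    · exact (huniq ω₀ ω hω₀0 hω₀π hω0 hωπ h hphase₀ hphase').elim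
  subst hωeq
  have hmag' : (4 / (A * π)) * s = m / lam := hmag
  have hAeq : A = A₀ := by
    rw [← hmag₀] at hmag'
    have h4 : (4:ℝ) / (A * π) = 4 / (A₀ * π) :=
      mul_right_cancel₀ (ne_of_gt hsin_pos) hmag'
    have hAπ : A * π ≠ 0 := by positivity
    have hA₀π : A₀ * π ≠ 0 := by positivity
    field_simp at h4
    linarith
  simp [hAeq]
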